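/- Let β ≥ 0, let x be a point of the Euclidean plane, and let W be a set of points contained in the closed disc of radius β + 1 centred at x such that every point w ∈ W has at most 2 points of W \ {w} within (closed) distance 1 of it. Then W is finite and card W ≤ 12(β + 2)². -/
import Mathlib

open Metric Set MeasureTheory ENNReal

local notation "E" => EuclideanSpace ℝ (Fin 2)

-- key finite-subset bound
theorem key (β : ℝ) (hβ : 0 ≤ β) (x : EuclideanSpace ℝ (Fin 2))
    (W : Set (EuclideanSpace ℝ (Fin 2))) (hW : W ⊆ closedBall x (β + 1))
    (h : ∀ w ∈ W, ((W \ {w}) ∩ closedBall w 1).encard ≤ (2 : ℕ∞))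
    (F : Finset (EuclideanSpace ℝ (Fin 2))) (hF : ↑F ⊆ W) :
    (F.card : ℝ) ≤ 12 * (β + 2) ^ 2 := by
  classical
  set μ : Measure E := volume
  have hdim : Module.finrank ℝ E = 2 := finrank_euclideanSpace_fin
  -- multiplicity bound: each y is in at most 3 of the balls (ball w (1/2)), w ∈ F
  have hmult : ∀ y : E, (F.filter (fun w => y ∈ ball w (1/2))).card ≤ 3 := by
    intro y
    by_contra hc
    push_neg at hc
    set S := F.filter (fun w => y ∈ ball w (1/2)) with hS
    obtain ⟨w₁, hw₁⟩ : S.Nonempty := Finset.card_pos.mp (by omega)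
    have hw₁W : w₁ ∈ W := hF (Finset.mem_filter.mp hw₁).1
    have hsub : ↑(S.erase w₁) ⊆ (W \ {w₁}) ∩ closedBall w₁ 1 := by
      intro w hw
      simp only [Finset.coe_erase, Set.mem_diff, Set.mem_singleton_iff] at hw
      obtain ⟨hwS, hwne⟩ := hw
      have h1 := Finset.mem_filter.mp hwS
      have h2 := Finset.mem_filter.mp hw₁
      refine ⟨⟨hF h1.1, hwne⟩, ?_⟩
      have : dist w w₁ ≤ dist w y + dist y w₁ := dist_triangle _ _ _
      have d1 : dist y w < 1/2 := h1.2
      have d2 : dist y w₁ < 1/2 := h2.2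
      rw [mem_closedBall]
      rw [dist_comm] at d1
      linarith
    have hle : ((↑(S.erase w₁) : Set E)).encard ≤ 2 :=
      le_trans (Set.encard_le_encard hsub) (h w₁ hw₁W)
    rw [Set.encard_coe_eq_coe_finsetCard, Finset.card_erase_of_mem hw₁] at hle
    have : (3 : ℕ) ≤ S.card - 1 := by omega
    exact absurd hle (by exact_mod_cast Nat.not_le.mpr (by omega))
  -- sum of measures of small balls ≤ 3 * measure of big ball
  have hptwise : ∀ y : E, (∑ w ∈ F, (ball w (1/2)).indicator (fun _ => (1:ℝ≥0∞)) y)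
      ≤ (closedBall x (β + 3/2)).indicator (fun _ => (3:ℝ≥0∞)) y := by
    intro y
    by_cases hy : y ∈ closedBall x (β + 3/2)
    · rw [Set.indicator_of_mem hy]
      have : (∑ w ∈ F, (ball w (1/2)).indicator (fun _ => (1:ℝ≥0∞)) y)
          = ((F.filter (fun w => y ∈ ball w (1/2))).card : ℝ≥0∞) := by
        rw [← Finset.sum_boole]
        refine Finset.sum_congr rfl fun w _ => Set.indicator_apply _ _ _
      rw [this]
      exact_mod_cast Nat.cast_le.mpr (hmult y)
    · rw [Set.indicator_of_notMem hy]
      refine le_of_eq (Finset.sum_eq_zero fun w hw => ?_)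
      rw [Set.indicator_of_notMem]
      intro hyw
      apply hy
      have hwx : dist w x ≤ β + 1 := hW (hF hw)
      have : dist y w < 1/2 := hyw
      rw [mem_closedBall]
      calc dist y x ≤ dist y w + dist w x := dist_triangle _ _ _
        _ ≤ β + 3/2 := by linarith
    -- done
  have hsum : ∑ w ∈ F, μ (ball w (1/2)) ≤ 3 * μ (closedBall x (β + 3/2)) := by
    have hmeas : ∀ w ∈ F, Measurable ((ball w (1/2)).indicator (fun _ => (1:ℝ≥0∞))) :=
      fun w _ => measurable_const.indicator measurableSet_ball
    calc ∑ w ∈ F, μ (ball w (1/2))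
        = ∑ w ∈ F, ∫⁻ y, (ball w (1/2)).indicator (fun _ => (1:ℝ≥0∞)) y ∂μ := by
          exact Finset.sum_congr rfl fun w _ =>
            (lintegral_indicator_one measurableSet_ball).symm
      _ = ∫⁻ y, ∑ w ∈ F, (ball w (1/2)).indicator (fun _ => (1:ℝ≥0∞)) y ∂μ :=
          (lintegral_finset_sum F hmeas).symm
      _ ≤ ∫⁻ y, (closedBall x (β + 3/2)).indicator (fun _ => (3:ℝ≥0∞)) y ∂μ :=
          lintegral_mono hptwise
      _ = 3 * μ (closedBall x (β + 3/2)) :=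
          lintegral_indicator_const measurableSet_closedBall 3
  -- compute measures
  have hhalf : (0:ℝ) ≤ 1/2 := by norm_num
  have hbig : (0:ℝ) ≤ β + 3/2 := by linarith
  have hball : ∀ w : E, μ (ball w (1/2)) = ENNReal.ofReal ((1/2:ℝ)^2) * μ (ball 0 1) := by
    intro w
    rw [Measure.addHaar_ball μ w hhalf, hdim]
  have hcball : μ (closedBall x (β + 3/2)) = ENNReal.ofReal ((β + 3/2)^2) * μ (ball 0 1) := by
    rw [Measure.addHaar_closedBall μ x hbig, hdim]
  rw [Finset.sum_congr rfl (fun w _ => hball w), Finset.sum_const, nsmul_eq_mul, hcball] at hsum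
  have hB0 : μ (ball (0:E) 1) ≠ 0 := (measure_ball_pos μ 0 one_pos).ne'
  have hBt : μ (ball (0:E) 1) ≠ ⊤ := measure_ball_lt_top.ne
  rw [← mul_assoc, ← mul_assoc] at hsum
  have hle : (F.card : ℝ≥0∞) * ENNReal.ofReal ((1/2:ℝ)^2) ≤ 3 * ENNReal.ofReal ((β + 3/2)^2) :=
    (ENNReal.mul_le_mul_iff_left hB0 hBt).mp hsum
  have hre : ((F.card : ℝ) * (1/2)^2) ≤ 3 * (β + 3/2)^2 := by
    rw [← ENNReal.ofReal_le_ofReal_iff (by positivity)]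
    rw [ENNReal.ofReal_mul (by positivity), ENNReal.ofReal_mul (by norm_num)]
    simpa [ENNReal.ofReal_natCast, ENNReal.ofReal_ofNat] using hle
  nlinarith [sq_nonneg (β + 3/2), sq_nonneg (β+2)]

/-- The bound `|W| ≤ 12(β + 2)²` from Section 6 of the paper: if `W` lies in the closed
disc of radius `β + 1` around `x` and every `w ∈ W` has at most `2` points of `W \ {w}`
within closed distance `1`, then `W` is finite with `|W| ≤ 12(β + 2)²`. -/
theorem stmt_4 (β : ℝ) (hβ : 0 ≤ β) (x : EuclideanSpace ℝ (Fin 2))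
    (W : Set (EuclideanSpace ℝ (Fin 2))) (hW : W ⊆ closedBall x (β + 1))
    (h : ∀ w ∈ W, ((W \ {w}) ∩ closedBall w 1).encard ≤ (2 : ℕ∞)) :
    W.Finite ∧ (W.ncard : ℝ) ≤ 12 * (β + 2) ^ 2 := by
  have hfin : W.Finite := by
    by_contra hinf
    have hinf' : W.Infinite := hinf
    obtain ⟨F, hFW, hFcard⟩ := hinf'.exists_subset_card_eq (⌈12 * (β + 2)^2⌉₊ + 1)
    have h1 := key β hβ x W hW h F hFW
    rw [hFcard] at h1
    have h2 : 12 * (β + 2)^2 ≤ (⌈12 * (β + 2)^2⌉₊ : ℝ) := Nat.le_ceil _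
    push_cast at h1
    linarith
  refine ⟨hfin, ?_⟩
  have := key β hβ x W hW h hfin.toFinset (by simp)
  rwa [← Set.ncard_eq_toFinset_card W hfin] at this
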